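/- For all x with 0 ≤ x < 1, one has (π/2)x ≤ tan((π/2)x) ≤ (π/2)·x/(1 − x²) (the second inequality is the Becker–Stark inequality). -/

import Mathlib

open Real

private lemma aux_nonneg {f f' : ℝ → ℝ} (hd : ∀ s, HasDerivAt f (f' s) s)
    (h0 : f 0 = 0) (hpos : ∀ s, 0 ≤ s → 0 ≤ f' s) {t : ℝ} (ht : 0 ≤ t) : 0 ≤ f t := by
  have hmono : MonotoneOn f (Set.Ici (0:ℝ)) := by
    apply monotoneOn_of_deriv_nonneg (convex_Ici 0)
      (fun s _ => (hd s).differentiableAt.continuousAt.continuousWithinAt)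
      (fun s _ => (hd s).differentiableAt.differentiableWithinAt)
    intro s hs
    rw [(hd s).deriv]
    rw [interior_Ici] at hs
    exact hpos s (le_of_lt hs)
  calc (0:ℝ) = f 0 := h0.symm
    _ ≤ f t := hmono (by simp) (by simpa using ht) ht

private lemma sin_lb (t : ℝ) (ht : 0 ≤ t) : t - t^3/6 ≤ Real.sin t := by
  have h := aux_nonneg (f := fun s => Real.sin s - (s - s^3/6))
    (f' := fun s => Real.cos s - (1 - s^2/2)) ?_ (by simp) ?_ ht
  · linarith
  · intro s
    have h1 : HasDerivAt (fun s : ℝ => s - s^3/6) (1 - (3:ℕ) * s^2 / 6) s := by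
      simpa [Pi.sub_def, Pi.add_def] using (hasDerivAt_id s).sub ((hasDerivAt_pow 3 s).div_const 6)
    have := (Real.hasDerivAt_sin s).sub h1
    exact this.congr_deriv (by push_cast; ring)
  · intro s _
    have := Real.one_sub_sq_div_two_le_cos (x := s)
    linarith

private lemma cos_ub (t : ℝ) (ht : 0 ≤ t) : Real.cos t ≤ 1 - t^2/2 + t^4/24 := by
  have h := aux_nonneg (f := fun s => (1 - s^2/2 + s^4/24) - Real.cos s)
    (f' := fun s => Real.sin s - (s - s^3/6)) ?_ (by simp) ?_ ht
  · linarith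
  · intro s
    have h1 : HasDerivAt (fun s : ℝ => 1 - s^2/2 + s^4/24)
        (-((2:ℕ) * s^1 / 2) + (4:ℕ) * s^3 / 24) s := by
      simpa [Pi.sub_def, Pi.add_def] using (((hasDerivAt_pow 2 s).div_const 2).const_sub 1).add
        ((hasDerivAt_pow 4 s).div_const 24)
    have := h1.sub (Real.hasDerivAt_cos s)
    exact this.congr_deriv (by push_cast; ring)
  · intro s hs
    linarith [sin_lb s hs]

private lemma sin_ub (t : ℝ) (ht : 0 ≤ t) : Real.sin t ≤ t - t^3/6 + t^5/120 := by
  have h := aux_nonneg (f := fun s => (s - s^3/6 + s^5/120) - Real.sin s)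
    (f' := fun s => (1 - s^2/2 + s^4/24) - Real.cos s) ?_ (by simp) ?_ ht
  · linarith
  · intro s
    have h1 : HasDerivAt (fun s : ℝ => s - s^3/6 + s^5/120)
        ((1 - (3:ℕ) * s^2 / 6) + (5:ℕ) * s^4 / 120) s := by
      simpa [Pi.sub_def, Pi.add_def] using ((hasDerivAt_id s).sub ((hasDerivAt_pow 3 s).div_const 6)).add
        ((hasDerivAt_pow 5 s).div_const 120)
    have := h1.sub (Real.hasDerivAt_sin s)
    exact this.congr_deriv (by push_cast; ring)
  · intro s hs
    linarith [cos_ub s hs]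

private lemma cos_lb (t : ℝ) (ht : 0 ≤ t) : 1 - t^2/2 + t^4/24 - t^6/720 ≤ Real.cos t := by
  have h := aux_nonneg (f := fun s => Real.cos s - (1 - s^2/2 + s^4/24 - s^6/720))
    (f' := fun s => (s - s^3/6 + s^5/120) - Real.sin s) ?_ (by simp) ?_ ht
  · linarith
  · intro s
    have h1 : HasDerivAt (fun s : ℝ => 1 - s^2/2 + s^4/24 - s^6/720)
        ((-((2:ℕ) * s^1 / 2) + (4:ℕ) * s^3 / 24) - (6:ℕ) * s^5 / 720) s := by
      simpa [Pi.sub_def, Pi.add_def] using ((((hasDerivAt_pow 2 s).div_const 2).const_sub 1).add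
        ((hasDerivAt_pow 4 s).div_const 24)).sub ((hasDerivAt_pow 6 s).div_const 720)
    have := (Real.hasDerivAt_cos s).sub h1
    exact this.congr_deriv (by push_cast; ring)
  · intro s hs
    linarith [sin_ub s hs]

private lemma poly_ineq (p t : ℝ) (ht0 : 0 ≤ t) (ht2 : t^2 ≤ 2)
    (hp1 : (9.8696:ℝ) ≤ p) (hp2 : p ≤ (9.86961:ℝ)) :
    (t - t^3/6 + t^5/120) * (p - 4*t^2) ≤ p * (t * (1 - t^2/2 + t^4/24 - t^6/720)) := by
  nlinarith [mul_nonneg (pow_nonneg ht0 3) (sq_nonneg (2 - t^2)),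
    mul_nonneg (pow_nonneg ht0 3) (sub_nonneg.mpr ht2),
    pow_nonneg ht0 3, pow_nonneg ht0 5, pow_nonneg ht0 7,
    mul_nonneg (pow_nonneg ht0 3) (sub_nonneg.mpr hp1),
    mul_nonneg (pow_nonneg ht0 5) (sub_nonneg.mpr hp1),
    mul_nonneg (pow_nonneg ht0 7) (sub_nonneg.mpr hp1),
    mul_nonneg (pow_nonneg ht0 3) (sub_nonneg.mpr hp2),
    mul_nonneg (pow_nonneg ht0 5) (sub_nonneg.mpr hp2),
    mul_nonneg (pow_nonneg ht0 7) (sub_nonneg.mpr hp2)]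

set_option maxHeartbeats 1600000 in
theorem stmt_2 (x : ℝ) (hx0 : 0 ≤ x) (hx1 : x < 1) :
    Real.pi / 2 * x ≤ Real.tan (Real.pi / 2 * x) ∧
      Real.tan (Real.pi / 2 * x) ≤ Real.pi / 2 * (x / (1 - x ^ 2)) := by
  have hpi : (3.141592 : ℝ) < π := by
    have := Real.pi_gt_d6; linarith
  have hpi' : π < 3.141593 := Real.pi_lt_d6
  set t := π / 2 * x with ht_def
  have ht0 : 0 ≤ t := by rw [ht_def]; positivity
  clear_value t
  have htlt : t < π / 2 := by
    rw [ht_def]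
    nlinarith
  constructor
  · exact Real.le_tan ht0 htlt
  · have hcos : 0 < Real.cos t := Real.cos_pos_of_mem_Ioo ⟨by linarith, htlt⟩
    have hx2 : 0 < 1 - x ^ 2 := by nlinarith
    have hrhs : π / 2 * (x / (1 - x ^ 2)) = t / (1 - x ^ 2) := by
      rw [ht_def]; ring
    rw [hrhs, Real.tan_eq_sin_div_cos, div_le_div_iff₀ hcos hx2]
    -- goal : sin t * (1 - x^2) ≤ t * cos t
    rcases le_or_gt x (9/10) with hcase | hcase
    · -- Taylor region
      have hsin := sin_ub t ht0
      have hcos' := cos_lb t ht0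
      have hstep1 : Real.sin t * (1 - x^2) ≤ (t - t^3/6 + t^5/120) * (1 - x^2) :=
        mul_le_mul_of_nonneg_right hsin (le_of_lt hx2)
      have hstep3 : t * (1 - t^2/2 + t^4/24 - t^6/720) ≤ t * Real.cos t :=
        mul_le_mul_of_nonneg_left hcos' ht0
      have htub : t ≤ 1.413717 := by
        rw [ht_def]; nlinarith
      have ht2 : t^2 ≤ 2 := by nlinarith
      have hS : 0 ≤ t - t^3/6 + t^5/120 := by
        nlinarith [pow_nonneg ht0 5, mul_nonneg ht0 (sub_nonneg.mpr ht2)]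
      have hp1 : (9.8696:ℝ) ≤ π^2 := by nlinarith
      have hp2 : π^2 ≤ (9.86961:ℝ) := by nlinarith
      have key := poly_ineq (π^2) t ht0 ht2 hp1 hp2
      have hpi2 : (t - t^3/6 + t^5/120) * (1 - x^2) * π^2
          = (t - t^3/6 + t^5/120) * (π^2 - 4*t^2) := by
        rw [ht_def]; ring
      have hstep2 : (t - t^3/6 + t^5/120) * (1 - x^2) ≤
          t * (1 - t^2/2 + t^4/24 - t^6/720) := by
        have hpp : (0:ℝ) < π^2 := by positivity
        rw [← mul_le_mul_iff_of_pos_right hpp]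
        linarith [key, hpi2]
      linarith [hstep1, hstep2, hstep3]
    · -- near 1 : use sin t ≤ 1, cos t = sin(π/2 - t) ≥ u - u^3/6
      have hu0 : 0 ≤ π/2 - t := le_of_lt (by linarith)
      have hcoseq : Real.cos t = Real.sin (π/2 - t) := (Real.sin_pi_div_two_sub t).symm
      have hsinlb := sin_lb (π/2 - t) hu0
      have hsin1 : Real.sin t ≤ 1 := Real.sin_le_one t
      have key : 1 - x^2 ≤ t * ((π/2 - t) - (π/2 - t)^3/6) := by
        set u := π/2 - t with hu_def
        have huu : u = π/2*(1-x) := by rw [hu_def, ht_def]; ring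
        clear_value u
        have hu0' : (0:ℝ) ≤ u := hu0
        have hul : u ≤ 0.15708 := by rw [huu]; nlinarith
        have hu2 : u^2 ≤ 0.03 := by nlinarith
        have h1 : 0.995*u ≤ u - u^3/6 := by
          nlinarith [mul_nonneg hu0' (sub_nonneg.mpr hu2)]
        have h2 : (1.41:ℝ) ≤ t := by rw [ht_def]; nlinarith
        have h3 : 1.57*(1-x) ≤ u := by rw [huu]; nlinarith
        have h5 : t*(0.995*u) ≤ t*(u - u^3/6) := mul_le_mul_of_nonneg_left h1 ht0
        have h6 : 1.41*(0.995*u) ≤ t*(0.995*u) :=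
          mul_le_mul_of_nonneg_right h2 (by positivity)
        have h7 : 1 - x^2 ≤ 1.41*(0.995*u) := by
          nlinarith [mul_nonneg (sub_nonneg.mpr hx1.le) (show (0:ℝ) ≤ 1.2 - x by linarith)]
        linarith
      calc Real.sin t * (1 - x^2) ≤ 1 * (1 - x^2) :=
            mul_le_mul_of_nonneg_right hsin1 (le_of_lt hx2)
        _ = 1 - x^2 := one_mul _
        _ ≤ t * ((π/2 - t) - (π/2 - t)^3/6) := key
        _ ≤ t * Real.sin (π/2 - t) := mul_le_mul_of_nonneg_left hsinlb ht0
        _ = t * Real.cos t := by rw [hcoseq]
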